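/- Let q > 0. There is no twice differentiable function f : ℝ → ℝ with f(t) > 0 for all t ∈ ℝ satisfying f''(t) = q · coth(f(t)) · (1 + f'(t)²) for all t ∈ ℝ. In other words, every solution of this ODE has a bounded maximal interval of existence. -/

import Mathlib

/-- For `q > 0` there is no globally defined (on all of `ℝ`) positive
twice differentiable solution of `f'' = q coth(f)(1+f'²)`: every maximal solution
has a bounded interval of existence. -/
theorem stmt_4 (q : ℝ) (hq : 0 < q) :
    ¬ ∃ f f' f'' : ℝ → ℝ,
        (∀ t, 0 < f t) ∧
        (∀ t, HasDerivAt f (f' t) t) ∧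
        (∀ t, HasDerivAt f' (f'' t) t) ∧
        (∀ t, f'' t = q * (Real.cosh (f t) / Real.sinh (f t)) * (1 + f' t ^ 2)) := by
  rintro ⟨f, f', f'', hpos, hf, hf', hode⟩
  set g : ℝ → ℝ := fun t => Real.arctan (f' t) - q * t with hg
  have hden : ∀ t, (0:ℝ) < 1 + f' t ^ 2 := fun t => by positivity
  have hgd : ∀ t, HasDerivAt g (f'' t / (1 + f' t ^ 2) - q) t := by
    intro t
    have h1 := (hf' t).arctan
    rw [one_div, inv_mul_eq_div] at h1
    have h2 : HasDerivAt (fun x : ℝ => q * x) (q * 1) t := (hasDerivAt_id t).const_mul q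
    have h3 := h1.sub h2
    rw [mul_one] at h3
    exact h3
  have hgd' : ∀ t, 0 ≤ f'' t / (1 + f' t ^ 2) - q := by
    intro t
    have hs : 0 < Real.sinh (f t) := Real.sinh_pos_iff.2 (hpos t)
    have hcoth : (1:ℝ) ≤ Real.cosh (f t) / Real.sinh (f t) := by
      rw [le_div_iff₀ hs, one_mul]
      exact (Real.sinh_lt_cosh _).le
    have hle : q * (1 + f' t ^ 2) ≤ f'' t := by
      rw [hode t]
      have h := mul_le_mul_of_nonneg_right (mul_le_mul_of_nonneg_left hcoth hq.le) (hden t).le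
      rw [mul_one] at h
      exact h
    have : q ≤ f'' t / (1 + f' t ^ 2) := (le_div_iff₀ (hden t)).2 hle
    linarith
  have hdiff : Differentiable ℝ g := fun t => (hgd t).differentiableAt
  have hmono : Monotone g := by
    apply monotone_of_deriv_nonneg hdiff
    intro t
    rw [(hgd t).deriv]
    exact hgd' t
  have hT : (0:ℝ) ≤ Real.pi / q := le_of_lt (div_pos Real.pi_pos hq)
  have h01 : g 0 ≤ g (Real.pi / q) := hmono hT
  have h2 := Real.arctan_lt_pi_div_two (f' (Real.pi / q))
  have h3 := Real.neg_pi_div_two_lt_arctan (f' 0)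
  have hqT : q * (Real.pi / q) = Real.pi := by field_simp
  simp only [hg] at h01
  rw [mul_zero, sub_zero, hqT] at h01
  linarith [Real.pi_pos]
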